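/- Let M ∈ ℝ^{n×n} have spectral radius strictly less than 1, let N ∈ ℝ^{n×k}, and let d : ℤ → ℝᵏ be in ℓ2. Then for every t ∈ ℤ the series v_t := ∑_{s=t}^{∞} (Mᵀ)^{s−t+1} N d_s converges absolutely, the resulting sequence v : ℤ → ℝⁿ is in ℓ2, and v satisfies the backward recursion v_t = Mᵀ(v_{t+1} + N d_t) for all t ∈ ℤ. -/

import Mathlib

open Matrix
open scoped ENNReal NNReal

/-- A two-sided sequence `x : ℤ → ℝ^p` is in ℓ2 if the family of squared Euclidean
norms `t ↦ ‖x_t‖² = x_t ⬝ᵥ x_t` is summable over ℤ. -/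
def MemL2 {p : ℕ} (x : ℤ → Fin p → ℝ) : Prop :=
  Summable fun t : ℤ => x t ⬝ᵥ x t

/-- Euclidean norm of a vector in `ℝ^p`. -/
noncomputable def eNorm {p : ℕ} (x : Fin p → ℝ) : ℝ :=
  Real.sqrt (x ⬝ᵥ x)

lemma dot_self_nonneg' {p : ℕ} (x : Fin p → ℝ) : 0 ≤ x ⬝ᵥ x :=
  Finset.sum_nonneg fun _ _ => mul_self_nonneg _

lemma eNorm_nonneg' {p : ℕ} (x : Fin p → ℝ) : 0 ≤ eNorm x := Real.sqrt_nonneg _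

lemma eNorm_sq {p : ℕ} (x : Fin p → ℝ) : eNorm x ^ 2 = x ⬝ᵥ x := Real.sq_sqrt (dot_self_nonneg' x)

lemma eNorm_eq {p : ℕ} (x : Fin p → ℝ) :
    eNorm x = ‖(PiLp.continuousLinearEquiv 2 ℝ (fun _ : Fin p => ℝ)).symm x‖ := by
  rw [EuclideanSpace.norm_eq, eNorm, dotProduct]
  congr 1
  refine Finset.sum_congr rfl fun i _ => ?_
  have : ((PiLp.continuousLinearEquiv 2 ℝ (fun _ : Fin p => ℝ)).symm x) i = x i := rfl
  rw [this, Real.norm_eq_abs, sq_abs, sq]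

lemma pi_norm_le_eNorm {p : ℕ} (x : Fin p → ℝ) : ‖x‖ ≤ eNorm x := by
  rw [pi_norm_le_iff_of_nonneg (eNorm_nonneg' x)]
  intro i
  rw [eNorm, Real.norm_eq_abs, ← Real.sqrt_mul_self_eq_abs]
  exact Real.sqrt_le_sqrt
    (Finset.single_le_sum (fun j _ => mul_self_nonneg (x j)) (Finset.mem_univ i))

lemma eNorm_le_pi {p : ℕ} (x : Fin p → ℝ) : eNorm x ≤ Real.sqrt p * ‖x‖ := by
  rw [eNorm]
  have h1 : x ⬝ᵥ x ≤ (p : ℝ) * ‖x‖ ^ 2 := by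
    rw [dotProduct]
    calc ∑ i, x i * x i ≤ ∑ _i : Fin p, ‖x‖ ^ 2 := by
          refine Finset.sum_le_sum fun i _ => ?_
          have h := norm_le_pi_norm x i
          calc x i * x i = ‖x i‖ ^ 2 := by rw [Real.norm_eq_abs, sq_abs, sq]
            _ ≤ ‖x‖ ^ 2 := by have h0 := norm_nonneg (x i); nlinarith
      _ = (p : ℝ) * ‖x‖ ^ 2 := by simp [Finset.sum_const, nsmul_eq_mul]
  calc Real.sqrt (x ⬝ᵥ x) ≤ Real.sqrt ((p : ℝ) * ‖x‖ ^ 2) := Real.sqrt_le_sqrt h1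
    _ = Real.sqrt p * ‖x‖ := by
        rw [Real.sqrt_mul (by positivity), Real.sqrt_sq (norm_nonneg _)]

section MatrixNorm
attribute [local instance] Matrix.linftyOpNormedAddCommGroup Matrix.linftyOpNormedRing
  Matrix.linftyOpNormedAlgebra

lemma norm_map_ofReal {n : ℕ} (A : Matrix (Fin n) (Fin n) ℝ) :
    ‖A.map Complex.ofReal‖ = ‖A‖ := by
  rw [Matrix.linfty_opNorm_def, Matrix.linfty_opNorm_def]
  congr 1
  refine Finset.sup_congr rfl fun i _ => ?_
  refine Finset.sum_congr rfl fun j _ => ?_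
  simp [Matrix.map_apply]

lemma spectrum_transpose' {n : ℕ} (A : Matrix (Fin n) (Fin n) ℂ) :
    spectrum ℂ Aᵀ = spectrum ℂ A := by
  ext z
  rw [spectrum.mem_iff, spectrum.mem_iff, not_iff_not]
  have h : algebraMap ℂ (Matrix (Fin n) (Fin n) ℂ) z - Aᵀ = (algebraMap ℂ _ z - A)ᵀ := by
    simp [Matrix.transpose_sub, Algebra.algebraMap_eq_smul_one, Matrix.transpose_smul,
      Matrix.transpose_one]
  rw [h, Matrix.isUnit_transpose]

lemma spectralRadius_transpose' {n : ℕ} (A : Matrix (Fin n) (Fin n) ℂ) :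
    spectralRadius ℂ Aᵀ = spectralRadius ℂ A := by
  simp only [spectralRadius, spectrum_transpose']

lemma map_ofReal_pow {n : ℕ} (A : Matrix (Fin n) (Fin n) ℝ) (m : ℕ) :
    (A.map Complex.ofReal) ^ m = (A ^ m).map Complex.ofReal := by
  have := map_pow
    (Complex.ofRealHom.mapMatrix : Matrix (Fin n) (Fin n) ℝ →+* Matrix (Fin n) (Fin n) ℂ) A m
  simp only [RingHom.mapMatrix_apply] at this
  exact this.symm

lemma matrix_pow_norm_bound {n : ℕ} (A : Matrix (Fin n) (Fin n) ℝ)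
    (hA : spectralRadius ℂ (A.map Complex.ofReal) < 1) :
    ∃ C r : ℝ, 0 ≤ C ∧ 0 < r ∧ r < 1 ∧ ∀ j : ℕ, ‖A ^ j‖ ≤ C * r ^ j := by
  rcases Nat.eq_zero_or_pos n with hn | hn
  · refine ⟨1, 1/2, zero_le_one, by norm_num, by norm_num, fun j => ?_⟩
    subst hn
    have h0 : A ^ j = 0 := Subsingleton.elim _ _
    rw [h0, norm_zero]
    positivity
  · haveI : Nonempty (Fin n) := ⟨⟨0, hn⟩⟩
    set a : Matrix (Fin n) (Fin n) ℂ := A.map Complex.ofReal with ha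
    have hgel := spectrum.pow_nnnorm_pow_one_div_tendsto_nhds_spectralRadius a
    obtain ⟨r', hρr', hr'1⟩ := ENNReal.lt_iff_exists_nnreal_btwn.mp hA
    have hev := hgel.eventually_lt_const hρr'
    obtain ⟨m₀, hm₀⟩ := Filter.eventually_atTop.mp hev
    have hr'pos : 0 < r' := by
      have : (0 : ℝ≥0∞) < (r' : ℝ≥0∞) := lt_of_le_of_lt zero_le hρr'
      exact_mod_cast this
    set r : ℝ := (r' : ℝ) with hrdef
    have hr0 : 0 < r := hr'pos
    have hr1 : r < 1 := by exact_mod_cast hr'1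
    set mm := max m₀ 1 with hmm
    have hpow : ∀ m : ℕ, mm ≤ m → ‖A ^ m‖ ≤ r ^ m := by
      intro m hm
      have hm1 : 1 ≤ m := le_trans (le_max_right _ _) hm
      have hmpos : (0 : ℝ) < m := by exact_mod_cast hm1
      have h := hm₀ m (le_trans (le_max_left _ _) hm)
      have h2 : (‖a ^ m‖₊ : ℝ≥0∞) < (r' : ℝ≥0∞) ^ (m : ℝ) := by
        have h3 := ENNReal.rpow_lt_rpow h hmpos
        rwa [← ENNReal.rpow_mul, one_div, inv_mul_cancel₀ (ne_of_gt hmpos),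
          ENNReal.rpow_one] at h3
      rw [ENNReal.rpow_natCast, ← ENNReal.coe_pow, ENNReal.coe_lt_coe] at h2
      have h4 : ‖a ^ m‖ ≤ (r' : ℝ) ^ m := by
        have := (NNReal.coe_lt_coe.mpr h2).le
        simpa [coe_nnnorm, NNReal.coe_pow] using this
      rwa [map_ofReal_pow, norm_map_ofReal] at h4
    set C : ℝ := (∑ j ∈ Finset.range mm, ‖A ^ j‖ / r ^ j) + 1 with hC
    have hsumnn : ∀ j ∈ Finset.range mm, 0 ≤ ‖A ^ j‖ / r ^ j := fun j _ =>
      div_nonneg (norm_nonneg _) (pow_nonneg hr0.le j)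
    have hC0 : 0 ≤ C := by
      rw [hC]; have := Finset.sum_nonneg hsumnn; linarith
    have hC1 : 1 ≤ C := by
      rw [hC]; have := Finset.sum_nonneg hsumnn; linarith
    refine ⟨C, r, hC0, hr0, hr1, fun j => ?_⟩
    rcases lt_or_ge j mm with hj | hj
    · have hmem : j ∈ Finset.range mm := Finset.mem_range.mpr hj
      have h5 : ‖A ^ j‖ / r ^ j ≤ C := by
        rw [hC]; have := Finset.single_le_sum hsumnn hmem; linarith
      have hrj : (0:ℝ) < r ^ j := pow_pos hr0 j
      calc ‖A ^ j‖ = (‖A ^ j‖ / r ^ j) * r ^ j := by field_simp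
        _ ≤ C * r ^ j := mul_le_mul_of_nonneg_right h5 hrj.le
    · calc ‖A ^ j‖ ≤ r ^ j := hpow j hj
        _ = 1 * r ^ j := (one_mul _).symm
        _ ≤ C * r ^ j := mul_le_mul_of_nonneg_right hC1 (pow_nonneg hr0.le j)

lemma matrix_pow_mulVec_bound {n : ℕ} (A : Matrix (Fin n) (Fin n) ℝ)
    (hA : spectralRadius ℂ (A.map Complex.ofReal) < 1) :
    ∃ C r : ℝ, 0 ≤ C ∧ 0 < r ∧ r < 1 ∧
      ∀ (j : ℕ) (x : Fin n → ℝ), ‖(A ^ j).mulVec x‖ ≤ C * r ^ j * ‖x‖ := by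
  obtain ⟨C, r, hC0, hr0, hr1, hb⟩ := matrix_pow_norm_bound A hA
  refine ⟨C, r, hC0, hr0, hr1, fun j x => ?_⟩
  calc ‖(A ^ j).mulVec x‖ ≤ ‖A ^ j‖ * ‖x‖ := Matrix.linfty_opNorm_mulVec _ _
    _ ≤ C * r ^ j * ‖x‖ := mul_le_mul_of_nonneg_right (hb j) (norm_nonneg x)

/-- If `M` has spectral radius `< 1` and `d ∈ ℓ2`, then for every `t` the
series `v_t = ∑_{s=t}^∞ (Mᵀ)^{s-t+1} N d_s` converges absolutely, the resulting sequence
`v` is in ℓ2, and `v_t = Mᵀ (v_{t+1} + N d_t)` for all `t`. -/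
theorem adjoint_series_solution {n k : ℕ}
    (M : Matrix (Fin n) (Fin n) ℝ)
    (hM : spectralRadius ℂ (M.map Complex.ofReal) < 1)
    (N : Matrix (Fin n) (Fin k) ℝ)
    (d : ℤ → Fin k → ℝ) (hd : MemL2 d) :
    (∀ t : ℤ, Summable fun j : ℕ =>
        eNorm (((Mᵀ) ^ (j + 1)).mulVec (N.mulVec (d (t + j))))) ∧
    MemL2 (fun t : ℤ => ∑' j : ℕ, ((Mᵀ) ^ (j + 1)).mulVec (N.mulVec (d (t + j)))) ∧
    (∀ t : ℤ,
      (∑' j : ℕ, ((Mᵀ) ^ (j + 1)).mulVec (N.mulVec (d (t + j)))) =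
        Mᵀ.mulVec
          ((∑' j : ℕ, ((Mᵀ) ^ (j + 1)).mulVec (N.mulVec (d (t + 1 + j)))) +
            N.mulVec (d t))) := by
  classical
  have hArad : spectralRadius ℂ ((Mᵀ).map Complex.ofReal) < 1 := by
    rw [Matrix.transpose_map, spectralRadius_transpose']; exact hM
  obtain ⟨C, r, hC0, hr0, hr1, hbound⟩ := matrix_pow_mulVec_bound Mᵀ hArad
  set e : ℤ → ℝ := fun s => eNorm (d s) with he
  have he0 : ∀ s, 0 ≤ e s := fun s => eNorm_nonneg' _
  have hesq : Summable fun s : ℤ => e s ^ 2 := by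
    refine hd.congr fun s => ?_
    exact (eNorm_sq (d s)).symm
  set S : ℝ := ∑' s : ℤ, e s ^ 2 with hSdef
  have hS0 : 0 ≤ S := tsum_nonneg fun s => sq_nonneg _
  have heB : ∀ s, e s ≤ Real.sqrt S := by
    intro s
    have h1 : e s ^ 2 ≤ S := Summable.le_tsum hesq s fun j _ => sq_nonneg _
    calc e s = Real.sqrt (e s ^ 2) := (Real.sqrt_sq (he0 s)).symm
      _ ≤ Real.sqrt S := Real.sqrt_le_sqrt h1
  set K : ℝ := Real.sqrt n * C * r * ‖N‖ with hKdef
  have hK0 : 0 ≤ K := by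
    rw [hKdef]
    exact mul_nonneg (mul_nonneg (mul_nonneg (Real.sqrt_nonneg _) hC0) hr0.le) (norm_nonneg _)
  have hterm : ∀ (s : ℤ) (j : ℕ),
      eNorm (((Mᵀ) ^ (j + 1)).mulVec (N.mulVec (d s))) ≤ K * r ^ j * e s := by
    intro s j
    have h1 : ‖N.mulVec (d s)‖ ≤ ‖N‖ * e s :=
      (Matrix.linfty_opNorm_mulVec N (d s)).trans
        (mul_le_mul_of_nonneg_left (pi_norm_le_eNorm _) (norm_nonneg N))
    calc eNorm (((Mᵀ) ^ (j + 1)).mulVec (N.mulVec (d s)))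
        ≤ Real.sqrt n * ‖((Mᵀ) ^ (j + 1)).mulVec (N.mulVec (d s))‖ := eNorm_le_pi _
      _ ≤ Real.sqrt n * (C * r ^ (j+1) * ‖N.mulVec (d s)‖) :=
          mul_le_mul_of_nonneg_left (hbound _ _) (Real.sqrt_nonneg _)
      _ ≤ Real.sqrt n * (C * r ^ (j+1) * (‖N‖ * e s)) := by
          refine mul_le_mul_of_nonneg_left (mul_le_mul_of_nonneg_left h1 ?_) (Real.sqrt_nonneg _)
          exact mul_nonneg hC0 (pow_nonneg hr0.le _)
      _ = K * r ^ j * e s := by rw [hKdef]; ring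
  have hgeo : Summable fun j : ℕ => r ^ j := summable_geometric_of_lt_one hr0.le hr1
  -- Part 1
  have hsum1 : ∀ t : ℤ, Summable fun j : ℕ =>
      eNorm (((Mᵀ) ^ (j + 1)).mulVec (N.mulVec (d (t + j)))) := by
    intro t
    refine Summable.of_nonneg_of_le (fun j => eNorm_nonneg' _) (fun j => ?_)
      (hgeo.mul_left (K * Real.sqrt S))
    calc eNorm (((Mᵀ) ^ (j + 1)).mulVec (N.mulVec (d (t + j))))
        ≤ K * r ^ j * e (t + j) := hterm _ _
      _ ≤ K * r ^ j * Real.sqrt S :=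
          mul_le_mul_of_nonneg_left (heB _) (mul_nonneg hK0 (pow_nonneg hr0.le _))
      _ = K * Real.sqrt S * r ^ j := by ring
  have hgsum : ∀ t : ℤ, Summable fun j : ℕ => ((Mᵀ) ^ (j + 1)).mulVec (N.mulVec (d (t + j))) := by
    intro t
    exact Summable.of_norm (Summable.of_nonneg_of_le (fun j => norm_nonneg _)
      (fun j => pi_norm_le_eNorm _) (hsum1 t))
  -- Cauchy-Schwarz preparation
  have hpq : (2:ℝ).HolderConjugate 2 := (Real.holderConjugate_iff_eq_conjExponent one_lt_two).mpr (by norm_num)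
  set sr : ℝ := Real.sqrt r with hsr
  have hsr0 : 0 ≤ sr := Real.sqrt_nonneg _
  have hsr2 : sr ^ 2 = r := Real.sq_sqrt hr0.le
  have hf2 : ∀ j : ℕ, (sr ^ j) ^ (2:ℝ) = r ^ j := by
    intro j
    rw [show ((2:ℝ)) = ((2:ℕ):ℝ) by norm_num, Real.rpow_natCast]
    calc (sr ^ j) ^ (2:ℕ) = (sr ^ 2) ^ j := by ring
      _ = r ^ j := by rw [hsr2]
  have hbase : ∀ t : ℤ, Summable fun j : ℕ => r ^ j * e (t + j) ^ 2 := by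
    intro t
    refine Summable.of_nonneg_of_le
      (fun j => mul_nonneg (pow_nonneg hr0.le _) (sq_nonneg _)) (fun j => ?_)
      (hgeo.mul_left S)
    have h1 : e (t + j) ^ 2 ≤ S := Summable.le_tsum hesq (t + j) fun _ _ => sq_nonneg _
    calc r ^ j * e (t + j) ^ 2 ≤ r ^ j * S :=
          mul_le_mul_of_nonneg_left h1 (pow_nonneg hr0.le _)
      _ = S * r ^ j := by ring
  have hCS : ∀ t : ℤ, (Summable fun j : ℕ => r ^ j * e (t + j)) ∧
      ∑' j : ℕ, r ^ j * e (t + j) ≤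
        (∑' j : ℕ, r ^ j) ^ ((1:ℝ)/2) * (∑' j : ℕ, r ^ j * e (t + j) ^ 2) ^ ((1:ℝ)/2) := by
    intro t
    have hgid : ∀ j : ℕ, (sr ^ j * e (t + j)) ^ (2:ℝ) = r ^ j * e (t + j) ^ 2 := by
      intro j
      rw [show ((2:ℝ)) = ((2:ℕ):ℝ) by norm_num, Real.rpow_natCast]
      calc (sr ^ j * e (t + j)) ^ (2:ℕ) = (sr ^ 2) ^ j * e (t + j) ^ 2 := by ring
        _ = r ^ j * e (t + j) ^ 2 := by rw [hsr2]
    have hfgid : ∀ j : ℕ, sr ^ j * (sr ^ j * e (t + j)) = r ^ j * e (t + j) := by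
      intro j
      calc sr ^ j * (sr ^ j * e (t + j)) = (sr ^ 2) ^ j * e (t + j) := by ring
        _ = r ^ j * e (t + j) := by rw [hsr2]
    have hf_sum : Summable fun j : ℕ => (sr ^ j) ^ (2:ℝ) :=
      hgeo.congr fun j => (hf2 j).symm
    have hg_sum : Summable fun j : ℕ => (sr ^ j * e (t + j)) ^ (2:ℝ) :=
      (hbase t).congr fun j => (hgid j).symm
    obtain ⟨hsum, hle⟩ := Real.summable_and_inner_le_Lp_mul_Lq_tsum_of_nonneg hpq
      (fun j => pow_nonneg hsr0 j) (fun j => mul_nonneg (pow_nonneg hsr0 j) (he0 _))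
      hf_sum hg_sum
    have e1 : ∑' j : ℕ, sr ^ j * (sr ^ j * e (t + j)) = ∑' j : ℕ, r ^ j * e (t + j) :=
      tsum_congr hfgid
    have e2 : ∑' j : ℕ, (sr ^ j) ^ (2:ℝ) = ∑' j : ℕ, r ^ j := tsum_congr hf2
    have e3 : ∑' j : ℕ, (sr ^ j * e (t + j)) ^ (2:ℝ) = ∑' j : ℕ, r ^ j * e (t + j) ^ 2 :=
      tsum_congr hgid
    rw [e1, e2, e3] at hle
    exact ⟨hsum.congr hfgid, hle⟩
  have hsum_re : ∀ t : ℤ, Summable fun j : ℕ => r ^ j * e (t + j) := fun t => (hCS t).1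
  -- summability of u
  have hG : Summable (fun p : ℕ × ℤ => r ^ p.1 * e (p.2 + p.1) ^ 2) := by
    rw [summable_prod_of_nonneg (fun p => mul_nonneg (pow_nonneg hr0.le _) (sq_nonneg _))]
    constructor
    · intro j
      dsimp only
      have h1 : Summable ((fun s : ℤ => e s ^ 2) ∘ fun t : ℤ => t + (j : ℤ)) :=
        hesq.comp_injective (add_left_injective _)
      exact (h1.congr fun t => rfl).mul_left _
    · dsimp only
      refine Summable.congr (hgeo.mul_right S) fun j => ?_
      rw [tsum_mul_left]
      congr 1
      rw [hSdef]
      exact ((Equiv.addRight (j : ℤ)).tsum_eq (fun s => e s ^ 2)).symm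
  have hF : Summable (fun p : ℤ × ℕ => r ^ p.2 * e (p.1 + p.2) ^ 2) := by
    have h := (Equiv.prodComm ℤ ℕ).summable_iff.mpr hG
    exact h.congr fun p => rfl
  have hu_sum : Summable (fun t : ℤ => ∑' j : ℕ, r ^ j * e (t + j) ^ 2) := by
    have h := ((summable_prod_of_nonneg
      (fun p : ℤ × ℕ => mul_nonneg (pow_nonneg hr0.le _) (sq_nonneg _))).mp hF).2
    exact h.congr fun t => tsum_congr fun j => rfl
  set u : ℤ → ℝ := fun t => ∑' j : ℕ, r ^ j * e (t + j) ^ 2 with hu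
  have hu0 : ∀ t, 0 ≤ u t := fun t => tsum_nonneg fun j =>
    mul_nonneg (pow_nonneg hr0.le _) (sq_nonneg _)
  set T : ℝ := ∑' j : ℕ, r ^ j with hT
  have hT0 : 0 ≤ T := tsum_nonneg fun j => pow_nonneg hr0.le j
  -- Part 2
  have part2 : MemL2 (fun t : ℤ => ∑' j : ℕ, ((Mᵀ) ^ (j + 1)).mulVec (N.mulVec (d (t + j)))) := by
    refine Summable.of_nonneg_of_le (fun t => dot_self_nonneg' _) (fun t => ?_)
      (hu_sum.mul_left (K ^ 2 * T))
    have h2 : eNorm (∑' j : ℕ, ((Mᵀ) ^ (j + 1)).mulVec (N.mulVec (d (t + j)))) ≤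
        ∑' j : ℕ, eNorm (((Mᵀ) ^ (j + 1)).mulVec (N.mulVec (d (t + j)))) := by
      rw [eNorm_eq]
      set φ : (Fin n → ℝ) ≃L[ℝ] PiLp 2 (fun _ : Fin n => ℝ) :=
        (PiLp.continuousLinearEquiv 2 ℝ (fun _ : Fin n => ℝ)).symm with hφ
      have hmap : φ (∑' j : ℕ, ((Mᵀ) ^ (j + 1)).mulVec (N.mulVec (d (t + j)))) =
          ∑' j : ℕ, φ (((Mᵀ) ^ (j + 1)).mulVec (N.mulVec (d (t + j)))) :=
        (φ : (Fin n → ℝ) →L[ℝ] PiLp 2 fun _ : Fin n => ℝ).map_tsum (hgsum t)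
      calc ‖φ (∑' j : ℕ, ((Mᵀ) ^ (j + 1)).mulVec (N.mulVec (d (t + j))))‖
          = ‖∑' j : ℕ, φ (((Mᵀ) ^ (j + 1)).mulVec (N.mulVec (d (t + j))))‖ := by rw [hmap]
        _ ≤ ∑' j : ℕ, ‖φ (((Mᵀ) ^ (j + 1)).mulVec (N.mulVec (d (t + j))))‖ :=
            norm_tsum_le_tsum_norm ((hsum1 t).congr fun j => by rw [eNorm_eq])
        _ = ∑' j : ℕ, eNorm (((Mᵀ) ^ (j + 1)).mulVec (N.mulVec (d (t + j)))) :=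
            tsum_congr fun j => (eNorm_eq _).symm
    have h3 : eNorm (∑' j : ℕ, ((Mᵀ) ^ (j + 1)).mulVec (N.mulVec (d (t + j)))) ≤
        K * ∑' j : ℕ, r ^ j * e (t + j) := by
      refine h2.trans ?_
      rw [← tsum_mul_left]
      exact Summable.tsum_le_tsum (fun j => (hterm (t + j) j).trans_eq (mul_assoc _ _ _))
        (hsum1 t) ((hsum_re t).mul_left K)
    have h4 : (∑' j : ℕ, r ^ j * e (t + j)) ^ 2 ≤ T * u t := by
      have hcs := (hCS t).2
      have hnn : 0 ≤ ∑' j : ℕ, r ^ j * e (t + j) :=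
        tsum_nonneg fun j => mul_nonneg (pow_nonneg hr0.le _) (he0 _)
      calc (∑' j : ℕ, r ^ j * e (t + j)) ^ 2
          ≤ (T ^ ((1:ℝ)/2) * (u t) ^ ((1:ℝ)/2)) ^ 2 := pow_le_pow_left₀ hnn hcs 2
        _ = T * u t := by
            rw [mul_pow, ← Real.rpow_natCast (T ^ ((1:ℝ)/2)) 2,
              ← Real.rpow_natCast ((u t) ^ ((1:ℝ)/2)) 2, ← Real.rpow_mul hT0,
              ← Real.rpow_mul (hu0 t)]
            norm_num
    calc (∑' j : ℕ, ((Mᵀ) ^ (j + 1)).mulVec (N.mulVec (d (t + j)))) ⬝ᵥ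
          (∑' j : ℕ, ((Mᵀ) ^ (j + 1)).mulVec (N.mulVec (d (t + j))))
        = eNorm (∑' j : ℕ, ((Mᵀ) ^ (j + 1)).mulVec (N.mulVec (d (t + j)))) ^ 2 :=
          (eNorm_sq _).symm
      _ ≤ (K * ∑' j : ℕ, r ^ j * e (t + j)) ^ 2 := pow_le_pow_left₀ (eNorm_nonneg' _) h3 2
      _ = K ^ 2 * (∑' j : ℕ, r ^ j * e (t + j)) ^ 2 := by ring
      _ ≤ K ^ 2 * (T * u t) := mul_le_mul_of_nonneg_left h4 (sq_nonneg K)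
      _ = K ^ 2 * T * u t := by ring
  -- Part 3
  have part3 : ∀ t : ℤ,
      (∑' j : ℕ, ((Mᵀ) ^ (j + 1)).mulVec (N.mulVec (d (t + j)))) =
        Mᵀ.mulVec
          ((∑' j : ℕ, ((Mᵀ) ^ (j + 1)).mulVec (N.mulVec (d (t + 1 + j)))) +
            N.mulVec (d t)) := by
    intro t
    rw [Summable.tsum_eq_zero_add (hgsum t)]
    have h0 : ((Mᵀ) ^ (0 + 1)).mulVec (N.mulVec (d (t + (0:ℕ)))) = Mᵀ.mulVec (N.mulVec (d t)) := by
      norm_num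
    have hshift : ∀ j : ℕ, ((Mᵀ) ^ (j + 1 + 1)).mulVec (N.mulVec (d (t + ((j : ℕ) + 1 : ℕ)))) =
        Mᵀ.mulVec (((Mᵀ) ^ (j + 1)).mulVec (N.mulVec (d (t + 1 + j)))) := by
      intro j
      rw [show (t + ((j + 1 : ℕ) : ℤ)) = t + 1 + (j : ℤ) by push_cast; ring]
      rw [pow_succ' (Mᵀ) (j + 1), ← Matrix.mulVec_mulVec]
    have hlin : ∑' j : ℕ, Mᵀ.mulVec (((Mᵀ) ^ (j + 1)).mulVec (N.mulVec (d (t + 1 + j)))) =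
        Mᵀ.mulVec (∑' j : ℕ, ((Mᵀ) ^ (j + 1)).mulVec (N.mulVec (d (t + 1 + j)))) := by
      let Tm : (Fin n → ℝ) →L[ℝ] (Fin n → ℝ) :=
        LinearMap.toContinuousLinearMap (Matrix.mulVecLin Mᵀ)
      have hTm : ∀ y : Fin n → ℝ, Tm y = Mᵀ.mulVec y := fun y => rfl
      have h := Tm.map_tsum (f := fun j : ℕ => ((Mᵀ) ^ (j + 1)).mulVec (N.mulVec (d (t + 1 + j))))
        (hgsum (t + 1))
      calc ∑' j : ℕ, Mᵀ.mulVec (((Mᵀ) ^ (j + 1)).mulVec (N.mulVec (d (t + 1 + j))))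
          = ∑' j : ℕ, Tm (((Mᵀ) ^ (j + 1)).mulVec (N.mulVec (d (t + 1 + j)))) :=
            tsum_congr fun j => (hTm _).symm
        _ = Tm (∑' j : ℕ, ((Mᵀ) ^ (j + 1)).mulVec (N.mulVec (d (t + 1 + j)))) := h.symm
        _ = Mᵀ.mulVec (∑' j : ℕ, ((Mᵀ) ^ (j + 1)).mulVec (N.mulVec (d (t + 1 + j)))) := hTm _
    calc ((Mᵀ) ^ (0 + 1)).mulVec (N.mulVec (d (t + (0:ℕ)))) +
          ∑' j : ℕ, ((Mᵀ) ^ (j + 1 + 1)).mulVec (N.mulVec (d (t + ((j : ℕ) + 1 : ℕ))))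
        = Mᵀ.mulVec (N.mulVec (d t)) +
            ∑' j : ℕ, Mᵀ.mulVec (((Mᵀ) ^ (j + 1)).mulVec (N.mulVec (d (t + 1 + j)))) := by
          rw [h0, tsum_congr hshift]
      _ = Mᵀ.mulVec (N.mulVec (d t)) +
            Mᵀ.mulVec (∑' j : ℕ, ((Mᵀ) ^ (j + 1)).mulVec (N.mulVec (d (t + 1 + j)))) := by
          rw [hlin]
      _ = Mᵀ.mulVec
            ((∑' j : ℕ, ((Mᵀ) ^ (j + 1)).mulVec (N.mulVec (d (t + 1 + j)))) +
              N.mulVec (d t)) := by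
          rw [Matrix.mulVec_add]; exact add_comm _ _
  exact ⟨hsum1, part2, part3⟩

end MatrixNorm
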